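/- arXiv:1605.04793 — 5 statements merged into one kernel-verified Lean document; each statement's English description precedes it below -/
import Mathlib

section
/- Let a, b : ℤ → ℝ be K-periodic sequences and Δx > 0. If (b_{k+1} − b_k)/Δx = (a_{k+1} + a_k)/2 for all k, then Σ_{k=1}^{K} a_k b_k = 0. -/
lemma tele_Icc (K : ℕ) (g : ℤ → ℝ) :
    ∑ k ∈ Finset.Icc (1 : ℤ) K, (g (k + 1) - g k) = g (K + 1) - g 1 := by
  induction K with
  | zero => simp
  | succ n ih =>
      have h : Finset.Icc (1 : ℤ) (((n : ℕ) : ℤ) + 1) = insert (((n : ℕ) : ℤ) + 1) (Finset.Icc (1 : ℤ) n) := by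
        ext x; simp [Finset.mem_Icc, Finset.mem_insert]; omega
      have hn : ((n : ℤ) + 1) ∉ Finset.Icc (1 : ℤ) n := by simp
      push_cast
      rw [h, Finset.sum_insert hn, ih]
      ring

theorem average_difference_orthogonality
    (K : ℕ) (hK : 1 ≤ K) (Δx : ℝ) (hΔx : 0 < Δx)
    (a b : ℤ → ℝ)
    (ha : ∀ k : ℤ, a (k + K) = a k) (hb : ∀ k : ℤ, b (k + K) = b k)
    (hscheme : ∀ k : ℤ, (b (k + 1) - b k) / Δx = (a (k + 1) + a k) / 2) :
    ∑ k ∈ Finset.Icc (1 : ℤ) K, a k * b k = 0 := by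
  have hne : Δx ≠ 0 := ne_of_gt hΔx
  have hb1 : ∀ k : ℤ, b (k + 1) = b k + Δx / 2 * (a (k + 1) + a k) := by
    intro k
    have := hscheme k
    field_simp at this
    linarith
  have key : ∀ k : ℤ, a k * b k =
      (2 / Δx) * (b (k+1)^2 - b k ^2) - 2 * (a (k+1) * b (k+1) - a k * b k)
        + (Δx / 2) * (a (k+1)^2 - a k ^2) - 3 * (a k * b k) := by
    intro k
    rw [hb1 k]
    field_simp
    ring
  have step : ∑ k ∈ Finset.Icc (1 : ℤ) K, (4 * (a k * b k)) = 0 := by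
    have e : ∀ k ∈ Finset.Icc (1:ℤ) K, 4 * (a k * b k) =
        ((2 / Δx) * (b (k+1)^2 - b k ^2) - 2 * (a (k+1) * b (k+1) - a k * b k)
          + (Δx / 2) * (a (k+1)^2 - a k ^2)) := by
      intro k _
      have := key k; linarith
    rw [Finset.sum_congr rfl e]
    have t1 := tele_Icc K (fun k => (2/Δx) * b k ^ 2 - 2 * (a k * b k) + (Δx/2) * a k ^2)
    have h2 : ∑ k ∈ Finset.Icc (1:ℤ) K,
        ((2 / Δx) * (b (k+1)^2 - b k ^2) - 2 * (a (k+1) * b (k+1) - a k * b k)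
          + (Δx / 2) * (a (k+1)^2 - a k ^2)) =
        ∑ k ∈ Finset.Icc (1:ℤ) K,
          ((fun k => (2/Δx) * b k ^ 2 - 2 * (a k * b k) + (Δx/2) * a k ^2) (k+1)
            - (fun k => (2/Δx) * b k ^ 2 - 2 * (a k * b k) + (Δx/2) * a k ^2) k) := by
      apply Finset.sum_congr rfl; intro k _; ring
    rw [h2]
    have h3 : ∑ k ∈ Finset.Icc (1:ℤ) K,
        ((fun k => (2/Δx) * b k ^ 2 - 2 * (a k * b k) + (Δx/2) * a k ^2) (k+1)
          - (fun k => (2/Δx) * b k ^ 2 - 2 * (a k * b k) + (Δx/2) * a k ^2) k) =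
        (2/Δx) * b ((K:ℤ)+1) ^ 2 - 2 * (a ((K:ℤ)+1) * b ((K:ℤ)+1)) + (Δx/2) * a ((K:ℤ)+1) ^2
          - ((2/Δx) * b 1 ^ 2 - 2 * (a 1 * b 1) + (Δx/2) * a 1 ^2) :=
      tele_Icc K (fun k => (2/Δx) * b k ^ 2 - 2 * (a k * b k) + (Δx/2) * a k ^2)
    rw [h3]
    have hA : a ((K:ℤ) + 1) = a 1 := by rw [add_comm]; exact ha 1
    have hB : b ((K:ℤ) + 1) = b 1 := by rw [add_comm]; exact hb 1
    simp [hA, hB]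
  have := step
  rw [← Finset.mul_sum] at this
  have h4 : (4:ℝ) ≠ 0 := by norm_num
  exact (mul_eq_zero.mp this).resolve_left h4
end

section
/- Let Δx > 0 and n ∈ ℤ with tan(nΔx/2) well-defined and nonzero (i.e., cos(nΔx/2) ≠ 0 and sin(nΔx/2) ≠ 0). Then u_k(t) = exp(i c t)·exp(i n k Δx) satisfies the average-difference semi-discrete scheme (u_{k+1}'(t) − u_k'(t))/Δx = (u_{k+1}(t) + u_k(t))/2 for all k and t if and only if c = −Δx/(2 tan(nΔx/2)). -/
open Complex

lemma dlem (c : ℝ) (C : ℂ) (t : ℝ) :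
    deriv (fun s : ℝ => Complex.exp (I * c * s) * C) t = I * c * Complex.exp (I * c * t) * C := by
  have h0 : HasDerivAt (fun s : ℝ => I * (c : ℂ) * s) (I * c) t := by
    simpa using (Complex.ofRealCLM.hasDerivAt (x := t)).const_mul (I * (c : ℂ))
  have h1 := (h0.cexp.mul_const C).deriv
  rw [h1]; ring

lemma key (Δx : ℝ) (hΔx : 0 < Δx) (θ : ℝ)
    (hcos : Real.cos (θ / 2) ≠ 0) (hsin : Real.sin (θ / 2) ≠ 0) (c : ℝ) :
    (I * c * (Complex.exp (I * θ) - 1)) / Δx = (Complex.exp (I * θ) + 1) / 2 ↔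
      c = - Δx / (2 * Real.tan (θ / 2)) := by
  have hΔx' : (Δx : ℝ) ≠ 0 := ne_of_gt hΔx
  have hsinθ : Real.sin θ = 2 * Real.sin (θ / 2) * Real.cos (θ / 2) := by
    have := Real.sin_two_mul (θ / 2); rwa [show 2 * (θ / 2) = θ by ring] at this
  have hcosθ : Real.cos θ = 2 * Real.cos (θ / 2) ^ 2 - 1 := by
    have := Real.cos_two_mul (θ / 2); rwa [show 2 * (θ / 2) = θ by ring] at this
  have hpyth : Real.sin (θ / 2) ^ 2 + Real.cos (θ / 2) ^ 2 = 1 := Real.sin_sq_add_cos_sq _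
  rw [show I * (θ : ℂ) = (θ : ℂ) * I by ring, Complex.exp_mul_I, Real.tan_eq_sin_div_cos]
  rw [div_eq_div_iff (by exact_mod_cast hΔx') two_ne_zero]
  rw [Complex.ext_iff]
  simp only [Complex.add_re, Complex.add_im, Complex.mul_re, Complex.mul_im, Complex.sub_re,
    Complex.sub_im, Complex.I_re, Complex.I_im, Complex.ofReal_re, Complex.ofReal_im,
    Complex.one_re, Complex.one_im, Complex.ofReal_cos,
    Complex.ofReal_sin, Complex.cos_ofReal_re, Complex.sin_ofReal_re, Complex.sin_ofReal_im,
    Complex.cos_ofReal_im, Complex.re_ofNat, Complex.im_ofNat]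
  constructor
  · rintro ⟨h1, h2⟩
    rw [hsinθ, hcosθ] at h1
    field_simp
    apply mul_right_cancel₀ hcos
    linear_combination (-1/2 : ℝ) * h1
  · intro h
    rw [hsinθ, hcosθ]
    field_simp at h
    constructor
    · linear_combination (-2 * Real.cos (θ / 2)) * h
    · linear_combination (-2 * Real.sin (θ / 2)) * h + (4 * c) * hpyth

theorem average_difference_phase_speed
    (Δx : ℝ) (hΔx : 0 < Δx) (n : ℤ)
    (hcos : Real.cos (n * Δx / 2) ≠ 0) (hsin : Real.sin (n * Δx / 2) ≠ 0) (c : ℝ) :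
    (∀ (k : ℤ) (t : ℝ),
      (deriv (fun s : ℝ => Complex.exp (I * c * s) * Complex.exp (I * n * (k + 1) * Δx)) t
        - deriv (fun s : ℝ => Complex.exp (I * c * s) * Complex.exp (I * n * k * Δx)) t) / Δx
      = (Complex.exp (I * c * t) * Complex.exp (I * n * (k + 1) * Δx)
          + Complex.exp (I * c * t) * Complex.exp (I * n * k * Δx)) / 2)
    ↔ c = - Δx / (2 * Real.tan (n * Δx / 2)) := by
  have hk := key Δx hΔx ((n : ℝ) * Δx) (by exact_mod_cast hcos) (by exact_mod_cast hsin) c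
  rw [show (((n : ℝ) * Δx : ℝ) : ℂ) = (n : ℂ) * (Δx : ℂ) by push_cast; ring] at hk
  rw [← hk]
  have hiff : ∀ (k : ℤ) (t : ℝ),
      ((deriv (fun s : ℝ => Complex.exp (I * c * s) * Complex.exp (I * n * (k + 1) * Δx)) t
        - deriv (fun s : ℝ => Complex.exp (I * c * s) * Complex.exp (I * n * k * Δx)) t) / Δx
      = (Complex.exp (I * c * t) * Complex.exp (I * n * (k + 1) * Δx)
          + Complex.exp (I * c * t) * Complex.exp (I * n * k * Δx)) / 2)
      ↔ ((I * c * (Complex.exp (I * ((n : ℂ) * Δx)) - 1)) / Δx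
          = (Complex.exp (I * ((n : ℂ) * Δx)) + 1) / 2) := by
    intro k t
    rw [dlem, dlem]
    rw [show I * (n : ℂ) * ((k : ℂ) + 1) * (Δx : ℂ)
        = I * (n : ℂ) * (k : ℂ) * (Δx : ℂ) + I * ((n : ℂ) * (Δx : ℂ)) by ring, Complex.exp_add]
    set A := Complex.exp (I * c * t) * Complex.exp (I * (n : ℂ) * (k : ℂ) * (Δx : ℂ)) with hA
    have hA0 : A ≠ 0 := mul_ne_zero (Complex.exp_ne_zero _) (Complex.exp_ne_zero _)
    rw [show (I * ↑c * Complex.exp (I * ↑c * ↑t) *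
          (Complex.exp (I * ↑n * ↑k * ↑Δx) * Complex.exp (I * (↑n * ↑Δx))) -
          I * ↑c * Complex.exp (I * ↑c * ↑t) * Complex.exp (I * ↑n * ↑k * ↑Δx)) / ↑Δx
        = A * ((I * c * (Complex.exp (I * ((n : ℂ) * Δx)) - 1)) / Δx) by rw [hA]; ring]
    rw [show (Complex.exp (I * ↑c * ↑t) *
          (Complex.exp (I * ↑n * ↑k * ↑Δx) * Complex.exp (I * (↑n * ↑Δx))) +
          Complex.exp (I * ↑c * ↑t) * Complex.exp (I * ↑n * ↑k * ↑Δx)) / 2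
        = A * ((Complex.exp (I * ((n : ℂ) * Δx)) + 1) / 2) by rw [hA]; ring]
    exact mul_right_inj' hA0
  constructor
  · intro h
    exact (hiff 0 0).mp (h 0 0)
  · intro h k t
    exact (hiff k t).mpr h
end

section
/- For all θ ∈ (0, π), the average-difference phase speed error is smaller than the central-difference one: |θ/(2 tan(θ/2)) − 1| ≤ |θ/sin(θ) − 1|, where in both cases we compare the normalized phase speed to the exact value 1. -/
theorem average_difference_phase_error_le (θ : ℝ) (h0 : 0 < θ) (hπ : θ < Real.pi) :
    |θ / (2 * Real.tan (θ / 2)) - 1| ≤ |θ / Real.sin θ - 1| := by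
  set x := θ / 2 with hxdef
  have hθ : θ = 2 * x := by rw [hxdef]; ring
  have hx0 : 0 < x := by rw [hxdef]; linarith
  have hx2 : x < Real.pi / 2 := by rw [hxdef]; linarith
  have hc : 0 < Real.cos x := Real.cos_pos_of_mem_Ioo ⟨by linarith [Real.pi_pos], hx2⟩
  have hs : 0 < Real.sin x := Real.sin_pos_of_pos_of_lt_pi hx0 (by linarith [Real.pi_pos])
  have hsx : Real.sin x ≤ x := Real.sin_le hx0.le
  have htan : x < Real.tan x := Real.lt_tan hx0 hx2
  have htaneq : Real.tan x = Real.sin x / Real.cos x := Real.tan_eq_sin_div_cos x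
  have hxc : x * Real.cos x < Real.sin x := by
    rw [htaneq] at htan
    exact (lt_div_iff₀ hc).mp htan
  have hsinθ : Real.sin θ = 2 * Real.sin x * Real.cos x := by rw [hθ]; exact Real.sin_two_mul x
  have h1 : θ / (2 * Real.tan (θ / 2)) - 1 ≤ 0 := by
    rw [← hxdef, htaneq, hθ]
    have : 2 * x / (2 * (Real.sin x / Real.cos x)) = x * Real.cos x / Real.sin x := by
      field_simp
    rw [this]
    have : x * Real.cos x / Real.sin x ≤ 1 := by
      rw [div_le_one hs]; linarith
    linarith
  have h2 : 0 ≤ θ / Real.sin θ - 1 := by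
    rw [hsinθ, hθ]
    have hle : 2 * Real.sin x * Real.cos x ≤ 2 * x := by nlinarith
    have hpos : 0 < 2 * Real.sin x * Real.cos x := by positivity
    have : (1 : ℝ) ≤ 2 * x / (2 * Real.sin x * Real.cos x) := by
      rw [le_div_iff₀ hpos]; linarith
    linarith
  have hA : 2 * x / (2 * (Real.sin x / Real.cos x)) = x * Real.cos x / Real.sin x := by
    field_simp
  have hB : 2 * x / (2 * Real.sin x * Real.cos x) = x / (Real.sin x * Real.cos x) := by
    field_simp
  rw [abs_of_nonpos h1, abs_of_nonneg h2, ← hxdef, htaneq, hsinθ, hθ, hA, hB, neg_sub,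
    sub_le_sub_iff, div_add_div _ _ (by positivity : (Real.sin x * Real.cos x) ≠ 0) hs.ne',
    le_div_iff₀ (by positivity)]
  nlinarith [sq_nonneg (1 - Real.cos x), mul_pos hs hc,
    mul_le_mul_of_nonneg_right hsx hc.le]
end

section
/- Let G(u) = u²/2, so δG/δu = u. The implicit midpoint average-difference scheme (u^{m+1}_{k+1} − u^{m+1}_k − u^m_{k+1} + u^m_k)/(Δt Δx) = (u^{m+1}_{k+1} + u^{m+1}_k + u^m_{k+1} + u^m_k)/4 conserves the discrete energy: if u^m, u^{m+1} : ℤ → ℝ are K-periodic and satisfy the scheme for all k, then Σ_{k=1}^K (u^{m+1}_k)² = Σ_{k=1}^K (u^m_k)². -/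
lemma periodic_shift_sum (K : ℕ) (hK : 1 ≤ K) (f : ℤ → ℝ)
    (hf : ∀ k : ℤ, f (k + K) = f k) :
    ∑ k ∈ Finset.Icc (1 : ℤ) K, f (k + 1) = ∑ k ∈ Finset.Icc (1 : ℤ) K, f k := by
  have hK' : (1 : ℤ) ≤ (K : ℤ) := by exact_mod_cast hK
  have h1 : ∑ k ∈ Finset.Icc (1 : ℤ) K, f (k + 1)
      = ∑ k ∈ Finset.Icc (2 : ℤ) ((K : ℤ) + 1), f k := by
    rw [show Finset.Icc (2 : ℤ) ((K : ℤ) + 1) = Finset.map (addRightEmbedding 1)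
      (Finset.Icc (1 : ℤ) K) by rw [Finset.map_add_right_Icc]; norm_num,
      Finset.sum_map]
    rfl
  have h2 : Finset.Icc (2 : ℤ) ((K : ℤ) + 1) = insert ((K : ℤ) + 1) (Finset.Icc (2 : ℤ) K) := by
    ext x; simp [Finset.mem_Icc]; omega
  have h3 : Finset.Icc (1 : ℤ) (K : ℤ) = insert (1 : ℤ) (Finset.Icc (2 : ℤ) K) := by
    ext x; simp [Finset.mem_Icc]; omega
  rw [h1, h2, h3, Finset.sum_insert (by simp), Finset.sum_insert (by simp)]
  have : f ((K : ℤ) + 1) = f 1 := by rw [add_comm]; exact hf 1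
  rw [this]

theorem average_difference_scheme_conserves_energy
    (K : ℕ) (hK : 1 ≤ K) (Δt Δx : ℝ) (hΔt : 0 < Δt) (hΔx : 0 < Δx)
    (u v : ℤ → ℝ)
    (hu : ∀ k : ℤ, u (k + K) = u k) (hv : ∀ k : ℤ, v (k + K) = v k)
    (hscheme : ∀ k : ℤ,
      (v (k + 1) - v k - u (k + 1) + u k) / (Δt * Δx)
        = (v (k + 1) + v k + u (k + 1) + u k) / 4) :
    ∑ k ∈ Finset.Icc (1 : ℤ) K, (v k) ^ 2 = ∑ k ∈ Finset.Icc (1 : ℤ) K, (u k) ^ 2 := by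
  set a : ℤ → ℝ := fun k => v k - u k with ha
  set b : ℤ → ℝ := fun k => v k + u k with hb
  have hne : Δt * Δx ≠ 0 := by positivity
  have key : ∀ k : ℤ, 4 * (a (k + 1) - a k) = Δt * Δx * (b (k + 1) + b k) := by
    intro k
    have := hscheme k
    field_simp at this
    simp only [ha, hb]
    linarith
  -- shifted sums
  have shiftab : ∑ k ∈ Finset.Icc (1 : ℤ) K, a (k + 1) * b (k + 1)
      = ∑ k ∈ Finset.Icc (1 : ℤ) K, a k * b k :=
    periodic_shift_sum K hK (fun k => a k * b k)
      (fun k => by simp only [ha, hb, hu k, hv k])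
  have shifta : ∑ k ∈ Finset.Icc (1 : ℤ) K, (a (k + 1)) ^ 2
      = ∑ k ∈ Finset.Icc (1 : ℤ) K, (a k) ^ 2 :=
    periodic_shift_sum K hK (fun k => (a k) ^ 2)
      (fun k => by simp only [ha, hu k, hv k])
  have shiftb : ∑ k ∈ Finset.Icc (1 : ℤ) K, (b (k + 1)) ^ 2
      = ∑ k ∈ Finset.Icc (1 : ℤ) K, (b k) ^ 2 :=
    periodic_shift_sum K hK (fun k => (b k) ^ 2)
      (fun k => by simp only [hb, hu k, hv k])
  -- E1 : Σ (a(k+1)+a k)*(b(k+1)+b k) = 0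
  have E1 : ∑ k ∈ Finset.Icc (1 : ℤ) K, (a (k + 1) + a k) * (b (k + 1) + b k) = 0 := by
    have h : Δt * Δx * ∑ k ∈ Finset.Icc (1 : ℤ) K, (a (k + 1) + a k) * (b (k + 1) + b k)
        = 4 * (∑ k ∈ Finset.Icc (1 : ℤ) K, (a (k + 1)) ^ 2
            - ∑ k ∈ Finset.Icc (1 : ℤ) K, (a k) ^ 2) := by
      rw [← Finset.sum_sub_distrib, Finset.mul_sum, Finset.mul_sum]
      apply Finset.sum_congr rfl
      intro k _
      have := key k
      linear_combination (-(a (k + 1) + a k)) * this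
    rw [shifta, sub_self, mul_zero] at h
    exact (mul_eq_zero.mp h).resolve_left hne
  -- E2 : Σ (a(k+1)-a k)*(b(k+1)-b k) = 0
  have E2 : ∑ k ∈ Finset.Icc (1 : ℤ) K, (a (k + 1) - a k) * (b (k + 1) - b k) = 0 := by
    have h : 4 * ∑ k ∈ Finset.Icc (1 : ℤ) K, (a (k + 1) - a k) * (b (k + 1) - b k)
        = Δt * Δx * (∑ k ∈ Finset.Icc (1 : ℤ) K, (b (k + 1)) ^ 2
            - ∑ k ∈ Finset.Icc (1 : ℤ) K, (b k) ^ 2) := by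
      rw [← Finset.sum_sub_distrib, Finset.mul_sum, Finset.mul_sum]
      apply Finset.sum_congr rfl
      intro k _
      have := key k
      linear_combination (b (k + 1) - b k) * this
    rw [shiftb, sub_self, mul_zero] at h
    linarith
  -- combine : 4 Σ a k b k = 0
  have comb : ∑ k ∈ Finset.Icc (1 : ℤ) K, ((a (k + 1) + a k) * (b (k + 1) + b k)
      + (a (k + 1) - a k) * (b (k + 1) - b k))
      = 2 * ∑ k ∈ Finset.Icc (1 : ℤ) K, a (k + 1) * b (k + 1)
        + 2 * ∑ k ∈ Finset.Icc (1 : ℤ) K, a k * b k := by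
    rw [Finset.mul_sum, Finset.mul_sum, ← Finset.sum_add_distrib]
    apply Finset.sum_congr rfl
    intro k _
    ring
  rw [Finset.sum_add_distrib, E1, E2, shiftab] at comb
  have hzero : ∑ k ∈ Finset.Icc (1 : ℤ) K, a k * b k = 0 := by linarith
  have : ∑ k ∈ Finset.Icc (1 : ℤ) K, ((v k) ^ 2 - (u k) ^ 2) = 0 := by
    rw [← hzero]
    apply Finset.sum_congr rfl
    intro k _
    simp only [ha, hb]
    ring
  rw [Finset.sum_sub_distrib] at this
  linarith
end

section
/- Let G(u) = u²/2. The implicit midpoint central difference scheme (u^{m+1}_{k+1} − u^{m+1}_{k−1} − u^m_{k+1} + u^m_{k−1})/(2Δt Δx) = (u^{m+1}_k + u^m_k)/2 conserves the discrete energy: if u^m, u^{m+1} : ℤ → ℝ are K-periodic and satisfy the scheme for all k, then Σ_{k=1}^K (u^{m+1}_k)² = Σ_{k=1}^K (u^m_k)². -/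
lemma telescope_Icc (f : ℤ → ℝ) (K : ℕ) :
    ∑ k ∈ Finset.Icc (1 : ℤ) K, (f k - f (k - 1)) = f K - f 0 := by
  induction K with
  | zero => simp
  | succ n ih =>
      have h1 : ((n + 1 : ℕ) : ℤ) = (n : ℤ) + 1 := by push_cast; ring
      have h2 : Finset.Icc (1 : ℤ) ((n : ℤ) + 1)
          = insert ((n : ℤ) + 1) (Finset.Icc (1 : ℤ) (n : ℤ)) := by
        ext x; simp [Finset.mem_Icc]; omega
      rw [h1, h2, Finset.sum_insert (by simp [Finset.mem_Icc]), ih]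
      ring_nf

theorem central_difference_scheme_conserves_energy
    (K : ℕ) (hK : 1 ≤ K) (Δt Δx : ℝ) (hΔt : 0 < Δt) (hΔx : 0 < Δx)
    (u v : ℤ → ℝ)
    (hu : ∀ k : ℤ, u (k + K) = u k) (hv : ∀ k : ℤ, v (k + K) = v k)
    (hscheme : ∀ k : ℤ,
      (v (k + 1) - v (k - 1) - u (k + 1) + u (k - 1)) / (2 * Δt * Δx)
        = (v k + u k) / 2) :
    ∑ k ∈ Finset.Icc (1 : ℤ) K, (v k) ^ 2 = ∑ k ∈ Finset.Icc (1 : ℤ) K, (u k) ^ 2 := by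
  set w : ℤ → ℝ := fun k => v k - u k with hw
  set f : ℤ → ℝ := fun k => w k * w (k + 1) with hf
  have hΔ : Δt * Δx ≠ 0 := by positivity
  have key : ∀ k : ℤ, v k ^ 2 - u k ^ 2 = (f k - f (k - 1)) / (Δt * Δx) := by
    intro k
    have hs := hscheme k
    have hsum : v k + u k = (w (k + 1) - w (k - 1)) / (Δt * Δx) := by
      field_simp at hs ⊢
      simp only [hw]
      linarith [hs]
    have : v k ^ 2 - u k ^ 2 = w k * (v k + u k) := by simp only [hw]; ring
    rw [this, hsum]
    have h2 : (k - 1) + 1 = k := by ring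
    simp only [hf, h2]
    field_simp
  have hsum : ∑ k ∈ Finset.Icc (1 : ℤ) K, (v k ^ 2 - u k ^ 2)
      = ∑ k ∈ Finset.Icc (1 : ℤ) K, (f k - f (k - 1)) / (Δt * Δx) := by
    exact Finset.sum_congr rfl fun k _ => key k
  rw [← Finset.sum_div, telescope_Icc] at hsum
  have hper : f K = f 0 := by
    simp only [hf, hw]
    have h0 : (0 : ℤ) + (K : ℤ) = (K : ℤ) := by ring
    have h1 : (1 : ℤ) + (K : ℤ) = (K : ℤ) + 1 := by ring
    rw [show v ((K : ℤ) + 1) = v 1 by rw [← h1, hv 1],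
        show u ((K : ℤ) + 1) = u 1 by rw [← h1, hu 1],
        show v ((K : ℤ)) = v 0 by rw [← h0, hv 0],
        show u ((K : ℤ)) = u 0 by rw [← h0, hu 0]]
    norm_num
  rw [hper, sub_self, zero_div] at hsum
  have := Finset.sum_sub_distrib (f := fun k => v k ^ 2) (g := fun k => u k ^ 2)
    (s := Finset.Icc (1 : ℤ) K)
  linarith [hsum, this]
end
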